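/- For all h > 0, 6·sinh(h)·arcsinh(1/(2·sinh(h))) < 3. -/

import Mathlib

theorem sinh_arsinh_ineq :
    ∀ h : ℝ, 0 < h →
      6 * Real.sinh h * Real.arsinh (1 / (2 * Real.sinh h)) < 3 := by
  intro h hh
  have hs : 0 < Real.sinh h := Real.sinh_pos_iff.mpr hh
  set x : ℝ := 1 / (2 * Real.sinh h) with hx
  have hxpos : 0 < x := by positivity
  have harc : Real.arsinh x < x := by
    have h1 : x < Real.sinh x := Real.self_lt_sinh_iff.mpr hxpos
    have := Real.arsinh_lt_arsinh.mpr h1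
    rwa [Real.arsinh_sinh] at this
  have h6 : 0 < 6 * Real.sinh h := by positivity
  calc 6 * Real.sinh h * Real.arsinh x < 6 * Real.sinh h * x :=
        (mul_lt_mul_iff_right₀ h6).mpr harc
    _ = 3 := by field_simp [hx]; rw [hx]; field_simp; ring
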